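/- Let G be a graph on N vertices and fix reals p ∈ (0,1] and an integer n ≥ 1. Suppose v is a 'good' vertex, i.e., for every 1 ≤ k ≤ n, fewer than (1/(2n))|N(v)|^k of the k-sequences of vertices in N(v) have common neighborhood of size at most (2n)^{-n-1} p^k N. Let H = (V₁,V₂,E) be bipartite with n vertices, a vertex u ∈ V₁ complete to V₂, and let each w ∈ V₁ \ {u} have degree d(w) ≤ n. Then the number of homomorphisms f from H to G with f(u) = v is at least (1/2)|N(v)|^{|V₂|} · Π_{w ∈ V₁, w≠u} (2n)^{-n-1} p^{d(w)} N. -/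

import Mathlib

open Finset
open scoped Classical

section StmtAux

variable {A B : Type*} [Fintype A] [Fintype B]

/-- common neighborhood in `G` of images under `g` of `H`-neighbors of `w`. -/
noncomputable def stmtCN (G : SimpleGraph B) (H : SimpleGraph A) (g : A → B) (w : A) :
    Finset B :=
  Finset.univ.filter (fun x => ∀ b ∈ H.neighborFinset w, G.Adj (g b) x)

/-- functions sending `s` into `N(v)` and everything else to `v`. -/
noncomputable def stmtTot (G : SimpleGraph B) (v : B) (s : Finset A) : Finset (A → B) :=
  Fintype.piFinset (fun a => if a ∈ s then G.neighborFinset v else {v})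

lemma stmtTot_card (G : SimpleGraph B) (v : B) (s : Finset A) :
    (stmtTot G v s).card = (G.degree v) ^ s.card := by
  rw [stmtTot, Fintype.card_piFinset]
  rw [← Finset.prod_subset (Finset.subset_univ s) (by intro a _ ha; simp [ha])]
  have h : ∀ a ∈ s, ((if a ∈ s then G.neighborFinset v else {v}) : Finset B).card
      = G.degree v := by
    intro a ha; rw [if_pos ha, SimpleGraph.card_neighborFinset_eq_degree]
  rw [Finset.prod_congr rfl h, Finset.prod_const]

lemma stmtTot_mem {G : SimpleGraph B} {v : B} {s : Finset A} {g : A → B}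
    (hg : g ∈ stmtTot G v s) :
    (∀ a ∈ s, g a ∈ G.neighborFinset v) ∧ (∀ a, a ∉ s → g a = v) := by
  rw [stmtTot, Fintype.mem_piFinset] at hg
  constructor
  · intro a ha; have := hg a; rwa [if_pos ha] at this
  · intro a ha; have := hg a; rwa [if_neg ha, Finset.mem_singleton] at this

end StmtAux

/-- if `v` is a good vertex of `G` and `H` is bipartite with a
vertex `u ∈ V₁` complete to `V₂` and all other vertices of `V₁` of degree at
most `n`, then the number of homomorphisms `f : H → G` with `f u = v` is at
least `(1/2)|N(v)|^{|V₂|} ∏_{w ∈ V₁ \ {u}} (2n)^{-n-1} p^{d(w)} N`. -/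
theorem stmt14 {A B : Type*} [Fintype A] [Fintype B]
    (G : SimpleGraph B) (N n : ℕ) (p : ℝ) (hN : Fintype.card B = N)
    (hn : 1 ≤ n) (hp0 : 0 < p) (hp1 : p ≤ 1)
    (v : B)
    (hgood : ∀ k, 1 ≤ k → k ≤ n →
      ((Finset.univ.filter (fun S : Fin k → B =>
          (∀ i, S i ∈ G.neighborFinset v) ∧
          (((Finset.univ.filter (fun w => ∀ i, G.Adj (S i) w)).card : ℝ) ≤
            p ^ k * N / (2 * (n : ℝ)) ^ (n + 1)))).card : ℝ) <
        (1 / (2 * (n : ℝ))) * (G.degree v : ℝ) ^ k)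
    (H : SimpleGraph A) (V1 V2 : Finset A)
    (hdisj : Disjoint V1 V2) (hcover : V1 ∪ V2 = Finset.univ)
    (hbip : ∀ a b, H.Adj a b → (a ∈ V1 ∧ b ∈ V2) ∨ (a ∈ V2 ∧ b ∈ V1))
    (hcard : Fintype.card A = n)
    (u : A) (hu : u ∈ V1) (hcomplete : ∀ b ∈ V2, H.Adj u b)
    (hdeg : ∀ w ∈ V1.erase u, H.degree w ≤ n) :
    (1 / 2 : ℝ) * (G.degree v : ℝ) ^ V2.card *
        ∏ w ∈ V1.erase u, (p ^ (H.degree w) * (N : ℝ) / (2 * (n : ℝ)) ^ (n + 1)) ≤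
      ((Finset.univ.filter (fun f : A → B =>
          f u = v ∧ ∀ a b, H.Adj a b → G.Adj (f a) (f b))).card : ℝ) := by
  have hN1 : 1 ≤ N := by
    rw [← hN]; exact Fintype.card_pos_iff.mpr ⟨v⟩
  have hn0 : (0:ℝ) < n := by exact_mod_cast hn
  have hn1 : (1:ℝ) ≤ (n:ℝ) := by exact_mod_cast hn
  have h2n : (1:ℝ) < (2 * (n:ℝ)) ^ (n + 1) := by
    apply one_lt_pow₀ (by linarith) (by omega)
  -- bounds
  set m : A → ℝ := fun w => p ^ (H.degree w) * (N : ℝ) / (2 * (n : ℝ)) ^ (n + 1) with hm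
  have hm0 : ∀ w, 0 < m w := by
    intro w
    apply div_pos (mul_pos (pow_pos hp0 _) (by exact_mod_cast hN1)) (by linarith)
  -- neighbors of vertices in V1 lie in V2
  have hnbr : ∀ w ∈ V1, H.neighborFinset w ⊆ V2 := by
    intro w hw b hb
    rw [SimpleGraph.mem_neighborFinset] at hb
    rcases hbip w b hb with ⟨_, h2⟩ | ⟨h1, _⟩
    · exact h2
    · exact absurd (Finset.disjoint_left.mp hdisj hw) (by simp [h1])
  have huV2 : u ∉ V2 := Finset.disjoint_left.mp hdisj hu
  -- good set
  set Good : Finset (A → B) := (stmtTot G v V2).filter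
    (fun g => ∀ w ∈ V1.erase u, m w < (stmtCN G H g w).card) with hGood
  -- Step A : card of Good
  have stepA : (1 / 2 : ℝ) * (G.degree v : ℝ) ^ V2.card ≤ Good.card := by
    set Bad : A → Finset (A → B) := fun w => (stmtTot G v V2).filter
      (fun g => ((stmtCN G H g w).card : ℝ) ≤ m w) with hBad
    have hcover' : stmtTot G v V2 ⊆ Good ∪ (V1.erase u).biUnion Bad := by
      intro g hg
      by_cases h : ∀ w ∈ V1.erase u, m w < ((stmtCN G H g w).card : ℝ)
      · exact Finset.mem_union_left _ (Finset.mem_filter.mpr ⟨hg, h⟩)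
      · push_neg at h
        rcases h with ⟨w, hw, hle⟩
        exact Finset.mem_union_right _ (Finset.mem_biUnion.mpr
          ⟨w, hw, Finset.mem_filter.mpr ⟨hg, hle⟩⟩)
    have hbadcard : ∀ w ∈ V1.erase u,
        ((Bad w).card : ℝ) ≤ (1/(2*(n:ℝ))) * (G.degree v : ℝ) ^ V2.card := by
      intro w hw
      have hwV1 : w ∈ V1 := (Finset.mem_erase.mp hw).2
      have hnbrV2 : H.neighborFinset w ⊆ V2 := hnbr w hwV1
      by_cases hk0 : H.degree w = 0
      · -- degree zero: Bad w is empty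
        have hempty : Bad w = ∅ := by
          rw [Finset.eq_empty_iff_forall_notMem]
          intro g hg
          rw [hBad, Finset.mem_filter] at hg
          have hnbrE : H.neighborFinset w = ∅ := Finset.card_eq_zero.mp
            (by rw [SimpleGraph.card_neighborFinset_eq_degree]; exact hk0)
          have hcn : stmtCN G H g w = Finset.univ := by
            rw [stmtCN]
            apply Finset.filter_true_of_mem
            intro x _
            rw [hnbrE]
            intro b hb
            exact absurd hb (Finset.notMem_empty b)
          have h2 := hg.2
          rw [hcn, Finset.card_univ, hN] at h2
          simp only [hm, hk0, pow_zero, one_mul] at h2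
          have hN0 : (1:ℝ) ≤ (N:ℝ) := by exact_mod_cast hN1
          rw [le_div_iff₀ (by linarith)] at h2
          nlinarith
        rw [hempty]
        simp only [Finset.card_empty, Nat.cast_zero]
        positivity
      · -- degree ≥ 1 : injection into bad sequences × rest
        have hk1 : 1 ≤ H.degree w := Nat.one_le_iff_ne_zero.mpr hk0
        have hkn : H.degree w ≤ n := hdeg w hw
        have hkV2 : (H.neighborFinset w).card = H.degree w :=
          SimpleGraph.card_neighborFinset_eq_degree H w
        set k := H.degree w with hkdef
        set e : Fin k ≃ {x // x ∈ H.neighborFinset w} :=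
          (finCongr hkV2.symm).trans (H.neighborFinset w).equivFin.symm with he
        set BadSeqs : Finset (Fin k → B) := Finset.univ.filter (fun S : Fin k → B =>
          (∀ i, S i ∈ G.neighborFinset v) ∧
          (((Finset.univ.filter (fun x => ∀ i, G.Adj (S i) x)).card : ℝ) ≤
            p ^ k * N / (2 * (n : ℝ)) ^ (n + 1))) with hBS
        set Rest : Finset (A → B) := stmtTot G v (V2 \ H.neighborFinset w) with hRest
        have hinj : (Bad w).card ≤ (BadSeqs ×ˢ Rest).card := by
          apply Finset.card_le_card_of_injOn
            (fun g => ((fun i => g (e i)),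
              (fun a => if a ∈ V2 \ H.neighborFinset w then g a else v)))
          · intro g hg
            rw [Finset.mem_coe] at hg ⊢
            rw [Finset.mem_product]
            obtain ⟨hgt, hgb⟩ := Finset.mem_filter.mp hg
            have hT := stmtTot_mem hgt
            constructor
            · rw [hBS, Finset.mem_filter]
              refine ⟨Finset.mem_univ _, fun i => hT.1 _ (hnbrV2 (e i).2), ?_⟩
              have hsets : (Finset.univ.filter (fun x => ∀ i : Fin k, G.Adj (g (e i)) x))
                  = stmtCN G H g w := by
                rw [stmtCN]
                apply Finset.filter_congr
                intro x _
                constructor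
                · intro h b hb
                  have := h (e.symm ⟨b, hb⟩)
                  simpa using this
                · intro h i
                  exact h (e i) (e i).2
              rw [hsets]
              exact hgb
            · rw [hRest, stmtTot, Fintype.mem_piFinset]
              intro a
              by_cases ha : a ∈ V2 \ H.neighborFinset w
              · simp only [ha, if_true]
                exact hT.1 a (Finset.mem_sdiff.mp ha).1
              · simp only [ha, if_false]
                exact Finset.mem_singleton_self v
          · intro g hg g' hg' heq
            rw [Finset.mem_coe] at hg hg'
            obtain ⟨hgt, _⟩ := Finset.mem_filter.mp hg
            obtain ⟨hgt', _⟩ := Finset.mem_filter.mp hg'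
            have h1 := congrArg Prod.fst heq
            have h2 := congrArg Prod.snd heq
            simp only at h1 h2
            funext a
            by_cases ha : a ∈ H.neighborFinset w
            · have := congrFun h1 (e.symm ⟨a, ha⟩)
              simpa using this
            · by_cases ha2 : a ∈ V2
              · have hmem : a ∈ V2 \ H.neighborFinset w := Finset.mem_sdiff.mpr ⟨ha2, ha⟩
                have := congrFun h2 a
                rwa [if_pos hmem, if_pos hmem] at this
              · rw [(stmtTot_mem hgt).2 a ha2, (stmtTot_mem hgt').2 a ha2]
        have hkle : k ≤ V2.card := hkV2 ▸ Finset.card_le_card hnbrV2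
        have hrest : Rest.card = (G.degree v) ^ (V2.card - k) := by
          rw [hRest, stmtTot_card, Finset.card_sdiff_of_subset hnbrV2, hkV2]
        have hBSbound : (BadSeqs.card : ℝ) ≤
            (1/(2*(n:ℝ))) * (G.degree v : ℝ) ^ k := le_of_lt (hgood k hk1 hkn)
        calc ((Bad w).card : ℝ) ≤ ((BadSeqs ×ˢ Rest).card : ℝ) := by exact_mod_cast hinj
          _ = (BadSeqs.card : ℝ) * ((G.degree v : ℝ) ^ (V2.card - k)) := by
              rw [Finset.card_product, hrest]; push_cast; ring
          _ ≤ ((1/(2*(n:ℝ))) * (G.degree v : ℝ) ^ k) * (G.degree v : ℝ) ^ (V2.card - k) := by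
              apply mul_le_mul_of_nonneg_right hBSbound (by positivity)
          _ = (1/(2*(n:ℝ))) * (G.degree v : ℝ) ^ V2.card := by
              rw [mul_assoc, ← pow_add]
              congr 2
              omega
    -- combine the bounds
    have h1 : (stmtTot G v V2).card ≤ Good.card + ∑ w ∈ V1.erase u, (Bad w).card := by
      calc (stmtTot G v V2).card ≤ (Good ∪ (V1.erase u).biUnion Bad).card :=
            Finset.card_le_card hcover'
        _ ≤ Good.card + ((V1.erase u).biUnion Bad).card := Finset.card_union_le _ _
        _ ≤ Good.card + ∑ w ∈ V1.erase u, (Bad w).card :=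
            Nat.add_le_add_left Finset.card_biUnion_le _
    have herase : ((V1.erase u).card : ℝ) ≤ (n:ℝ) - 1 := by
      have h2 : (V1.erase u).card = V1.card - 1 := Finset.card_erase_of_mem hu
      have h3 : V1.card ≤ n := hcard ▸ Finset.card_le_univ V1
      have h4 : 1 ≤ V1.card := Finset.card_pos.mpr ⟨u, hu⟩
      have : (V1.erase u).card ≤ n - 1 := by omega
      have hcast : ((V1.erase u).card : ℝ) ≤ ((n - 1 : ℕ) : ℝ) := by exact_mod_cast this
      calc ((V1.erase u).card : ℝ) ≤ ((n - 1 : ℕ) : ℝ) := hcast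
        _ ≤ (n:ℝ) - 1 := by
            have : ((n - 1 : ℕ) : ℝ) = (n:ℝ) - 1 := by
              rw [Nat.cast_sub hn]; norm_num
            rw [this]
    have hsum : ((∑ w ∈ V1.erase u, (Bad w).card : ℕ) : ℝ) ≤
        ((n:ℝ) - 1) * ((1/(2*(n:ℝ))) * (G.degree v : ℝ) ^ V2.card) := by
      push_cast
      calc (∑ w ∈ V1.erase u, ((Bad w).card : ℝ)) ≤
          ∑ _w ∈ V1.erase u, (1/(2*(n:ℝ))) * (G.degree v : ℝ) ^ V2.card :=
            Finset.sum_le_sum hbadcard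
        _ = ((V1.erase u).card : ℝ) * ((1/(2*(n:ℝ))) * (G.degree v : ℝ) ^ V2.card) := by
            rw [Finset.sum_const, nsmul_eq_mul]
        _ ≤ ((n:ℝ) - 1) * ((1/(2*(n:ℝ))) * (G.degree v : ℝ) ^ V2.card) := by
            apply mul_le_mul_of_nonneg_right herase (by positivity)
    have h1R : ((G.degree v : ℝ) ^ V2.card) ≤ (Good.card : ℝ) +
        ((n:ℝ) - 1) * ((1/(2*(n:ℝ))) * (G.degree v : ℝ) ^ V2.card) := by
      have hc : ((stmtTot G v V2).card : ℝ) = (G.degree v : ℝ) ^ V2.card := by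
        rw [stmtTot_card]; push_cast; ring
      have := h1
      have hcast : ((stmtTot G v V2).card : ℝ) ≤ (Good.card : ℝ) +
          ((∑ w ∈ V1.erase u, (Bad w).card : ℕ) : ℝ) := by exact_mod_cast h1
      rw [hc] at hcast
      linarith
    have hD : (0:ℝ) ≤ (G.degree v : ℝ) ^ V2.card := by positivity
    set D : ℝ := (G.degree v : ℝ) ^ V2.card with hDdef
    have hne : (n:ℝ) ≠ 0 := ne_of_gt hn0
    have hmul := mul_le_mul_of_nonneg_left h1R (by linarith : (0:ℝ) ≤ 2*(n:ℝ))
    have hsimp : 2*(n:ℝ)*((Good.card:ℝ) + ((n:ℝ)-1)*((1/(2*(n:ℝ)))*D)) =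
        2*(n:ℝ)*(Good.card:ℝ) + ((n:ℝ)-1)*D := by
      field_simp
    rw [hsimp] at hmul
    nlinarith [hmul, hD, hn0]
  -- Step B : for each good g, many extensions
  set F : Finset (A → B) := Finset.univ.filter (fun f : A → B =>
      f u = v ∧ ∀ a b, H.Adj a b → G.Adj (f a) (f b)) with hF
  set ext : (A → B) → Finset (A → B) := fun g => Fintype.piFinset
    (fun a => if a = u then {v} else if a ∈ V2 then {g a} else stmtCN G H g a) with hext
  have hsub : ∀ g ∈ Good, ext g ⊆ F := by
    intro g hg f hf
    have hmem := Fintype.mem_piFinset.mp hf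
    obtain ⟨hgt, hgGood⟩ := Finset.mem_filter.mp hg
    have hT := stmtTot_mem hgt
    have hfu : f u = v := by
      have := hmem u
      rwa [if_pos rfl, Finset.mem_singleton] at this
    have hfV2 : ∀ b ∈ V2, f b = g b := by
      intro b hb
      have hbu : b ≠ u := fun h => huV2 (h ▸ hb)
      have := hmem b
      rwa [if_neg hbu, if_pos hb, Finset.mem_singleton] at this
    have key : ∀ a b, H.Adj a b → a ∈ V1 → b ∈ V2 → G.Adj (f a) (f b) := by
      intro a b hab ha hb
      by_cases hau : a = u
      · subst hau
        rw [hfu, hfV2 b hb]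
        rw [← SimpleGraph.mem_neighborFinset]
        exact hT.1 b hb
      · have haV2 : a ∉ V2 := Finset.disjoint_left.mp hdisj ha
        have hfa := hmem a
        rw [if_neg hau, if_neg haV2] at hfa
        rw [stmtCN, Finset.mem_filter] at hfa
        have hadj := hfa.2 b (by rwa [SimpleGraph.mem_neighborFinset])
        rw [hfV2 b hb]
        exact hadj.symm
    rw [hF, Finset.mem_filter]
    refine ⟨Finset.mem_univ _, hfu, ?_⟩
    intro a b hab
    rcases hbip a b hab with ⟨ha, hb⟩ | ⟨ha, hb⟩
    · exact key a b hab ha hb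
    · exact (key b a hab.symm hb ha).symm
  have hdisjExt : ∀ g ∈ Good, ∀ g' ∈ Good, g ≠ g' → Disjoint (ext g) (ext g') := by
    intro g hg g' hg' hne
    rw [Finset.disjoint_left]
    intro f hf hf'
    apply hne
    funext a
    by_cases haV2 : a ∈ V2
    · have h1 := (Fintype.mem_piFinset.mp hf) a
      have h2 := (Fintype.mem_piFinset.mp hf') a
      have hau : a ≠ u := fun h => huV2 (h ▸ haV2)
      rw [if_neg hau, if_pos haV2, Finset.mem_singleton] at h1 h2
      rw [← h1, ← h2]
    · have t1 := (stmtTot_mem (Finset.mem_filter.mp hg).1).2 a haV2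
      have t2 := (stmtTot_mem (Finset.mem_filter.mp hg').1).2 a haV2
      rw [t1, t2]
  have hcardExt : ∀ g, (ext g).card = ∏ w ∈ V1.erase u, (stmtCN G H g w).card := by
    intro g
    rw [hext]
    rw [Fintype.card_piFinset]
    rw [← Finset.prod_subset (Finset.subset_univ (V1.erase u)) ?h1]
    · apply Finset.prod_congr rfl
      intro a ha
      have hau : a ≠ u := (Finset.mem_erase.mp ha).1
      have haV2 : a ∉ V2 := Finset.disjoint_left.mp hdisj (Finset.mem_erase.mp ha).2
      rw [if_neg hau, if_neg haV2]
    · intro a _ ha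
      by_cases hau : a = u
      · rw [if_pos hau]; simp
      · have haV1 : a ∉ V1 := fun h => ha (Finset.mem_erase.mpr ⟨hau, h⟩)
        have haV2 : a ∈ V2 := by
          have hmem2 : a ∈ V1 ∪ V2 := hcover ▸ Finset.mem_univ a
          rcases Finset.mem_union.mp hmem2 with h | h
          · exact absurd h haV1
          · exact h
        rw [if_neg hau, if_pos haV2]; simp
  have stepB : ∑ g ∈ Good, ∏ w ∈ V1.erase u, ((stmtCN G H g w).card) ≤ F.card := by
    calc ∑ g ∈ Good, ∏ w ∈ V1.erase u, ((stmtCN G H g w).card)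
        = ∑ g ∈ Good, (ext g).card :=
          Finset.sum_congr rfl (fun g _ => (hcardExt g).symm)
      _ = (Good.biUnion ext).card := (Finset.card_biUnion hdisjExt).symm
      _ ≤ F.card := Finset.card_le_card (by
          intro f hf
          rcases Finset.mem_biUnion.mp hf with ⟨g, hg, hfg⟩
          exact hsub g hg hfg)
  -- combine
  have stepC : Good.card * ∏ w ∈ V1.erase u, m w ≤
      ∑ g ∈ Good, ∏ w ∈ V1.erase u, ((stmtCN G H g w).card : ℝ) := by
    calc (Good.card : ℝ) * ∏ w ∈ V1.erase u, m w
        = ∑ _g ∈ Good, ∏ w ∈ V1.erase u, m w := by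
          rw [Finset.sum_const, nsmul_eq_mul]
      _ ≤ ∑ g ∈ Good, ∏ w ∈ V1.erase u, ((stmtCN G H g w).card : ℝ) := by
          apply Finset.sum_le_sum
          intro g hg
          exact Finset.prod_le_prod (fun w _ => (hm0 w).le)
            (fun w hw => le_of_lt ((Finset.mem_filter.mp hg).2 w hw))
  have hprodpos : 0 < ∏ w ∈ V1.erase u, m w := Finset.prod_pos (fun w _ => hm0 w)
  calc (1 / 2 : ℝ) * (G.degree v : ℝ) ^ V2.card * ∏ w ∈ V1.erase u, m w
      ≤ Good.card * ∏ w ∈ V1.erase u, m w := by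
        apply mul_le_mul_of_nonneg_right stepA (le_of_lt hprodpos)
    _ ≤ ∑ g ∈ Good, ∏ w ∈ V1.erase u, ((stmtCN G H g w).card : ℝ) := stepC
    _ = ((∑ g ∈ Good, ∏ w ∈ V1.erase u, (stmtCN G H g w).card : ℕ) : ℝ) := by
          push_cast; rfl
    _ ≤ (F.card : ℝ) := by exact_mod_cast stepB
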